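/- Let A be a (not necessarily commutative) unital ring, d : A → A an additive map, and ω ∈ A, satisfying: (i) d(d(a)) = 0 for all a ∈ A; (ii) d(ω·a) = d(ω)·a − ω·d(a) for all a ∈ A; (iii) d(d(ω)·a) = d(ω)·d(a) for all a ∈ A. Define ∇(a) = d(a) + ω·a and F = d(ω) + ω·ω. Then for every N ≥ 1 and every a ∈ A, the (2N+1)-fold iterate of ∇ satisfies ∇^{2N+1}(a) = F^N·∇(a). -/
import Mathlib


/-- Under the hypotheses (i) `d² = 0`, (ii) the odd Leibniz rule for `ω`,
(iii) the even Leibniz rule for `d ω`, the `(2N+1)`-fold iterate of the covariant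
derivative `∇ a = d a + ω * a` equals `F^N * ∇ a`, where `F = d ω + ω * ω`. -/
theorem nabla_iterate_odd_eq_curvature_pow_mul_nabla
    (A : Type*) [Ring A] (d : A → A)
    (hd_add : ∀ a b : A, d (a + b) = d a + d b)
    (ω : A)
    (hd_sq : ∀ a : A, d (d a) = 0)
    (hleibniz : ∀ a : A, d (ω * a) = d ω * a - ω * d a)
    (hleibniz' : ∀ a : A, d (d ω * a) = d ω * d a)
    (nabla : A → A) (hnabla : ∀ a : A, nabla a = d a + ω * a)
    (F : A) (hF : F = d ω + ω * ω) :
    ∀ N : ℕ, 1 ≤ N → ∀ a : A, nabla^[2 * N + 1] a = F ^ N * nabla a := by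
  have hsq : ∀ a : A, nabla (nabla a) = F * a := by
    intro a
    rw [hnabla, hnabla, hd_add, hd_sq, hleibniz, hF]
    noncomm_ring
  have hFcomm : ∀ a : A, nabla (F * a) = F * nabla a := by
    intro a
    rw [hnabla, hnabla, hF, add_mul, hd_add, hleibniz', mul_assoc ω ω a,
      hleibniz (ω * a), hleibniz]
    noncomm_ring
  intro N hN
  induction N with
  | zero => omega
  | succ n ih =>
    intro a
    rcases Nat.eq_or_lt_of_le hN with h | h
    · -- n + 1 = 1, so n = 0
      have hn : n = 0 := by omega
      subst hn
      show nabla^[3] a = F ^ 1 * nabla a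
      have : nabla^[3] a = nabla (nabla (nabla a)) := by
        simp [Function.iterate_succ_apply']
      rw [this, hsq, pow_one]
    · have hn1 : 1 ≤ n := by omega
      have key : nabla^[2 * (n + 1) + 1] a = nabla^[2 * n + 1] (nabla (nabla a)) := by
        have : 2 * (n + 1) + 1 = (2 * n + 1) + 2 := by ring
        rw [this, Function.iterate_add_apply]
        rfl
      rw [key, hsq, ih hn1, hFcomm, ← mul_assoc, ← pow_succ]
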